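/- Let φ(x₁,…,x_h) = Σᵢ cᵢxᵢ be a linear form with integer coefficients satisfying property N. Then the set A = {log p : p prime} of real numbers is a φ-Sidon set: if p₁,…,p_h and q₁,…,q_h are primes with Σᵢ cᵢ log pᵢ = Σᵢ cᵢ log qᵢ, then pᵢ = qᵢ for all i. -/

import Mathlib

open Finset

private lemma padicValRat_zpow' (r : ℕ) [Fact r.Prime] {x : ℚ} (hx : x ≠ 0) (n : ℤ) :
    padicValRat r (x ^ n) = n * padicValRat r x := by
  induction n using Int.rec with
  | ofNat m => simp [padicValRat.pow (q := x), mul_comm]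
  | negSucc m =>
      rw [zpow_negSucc, padicValRat.inv, padicValRat.pow]
      push_cast [Int.negSucc_eq]; ring_nf

private lemma padicValRat_prod' {ι : Type*} (r : ℕ) [Fact r.Prime] (s : Finset ι)
    (f : ι → ℚ) (hf : ∀ i ∈ s, f i ≠ 0) :
    padicValRat r (∏ i ∈ s, f i) = ∑ i ∈ s, padicValRat r (f i) := by
  classical
  induction s using Finset.induction with
  | empty => simp [padicValRat.one]
  | insert a s hx ih =>
      rw [Finset.prod_insert hx, Finset.sum_insert hx,
        padicValRat.mul (hf a (Finset.mem_insert_self a s))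
          (Finset.prod_ne_zero_iff.2 fun i hi => hf i (Finset.mem_insert_of_mem hi)),
        ih fun i hi => hf i (Finset.mem_insert_of_mem hi)]

private lemma padicValRat_prime_prime (r s : ℕ) (hr : r.Prime) (hs : s.Prime) :
    haveI : Fact r.Prime := ⟨hr⟩
    padicValRat r (s : ℚ) = if s = r then 1 else 0 := by
  haveI : Fact r.Prime := ⟨hr⟩
  split_ifs with h
  · subst h; exact padicValRat.self hr.one_lt
  · rw [padicValRat.of_nat, padicValNat.eq_zero_of_not_dvd]
    · simp
    · rw [Nat.prime_dvd_prime_iff_eq hr hs]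
      exact fun e => h e.symm

/-- If a linear form with integer coefficients has property N, then {log p : p prime}
is a Sidon set for it. -/
theorem log_primes_phi_sidon (h : ℕ) (c : Fin h → ℤ)
    (hN : ¬ ∃ I₁ I₂ : Finset (Fin h), Disjoint I₁ I₂ ∧ (I₁ ∪ I₂).Nonempty ∧
      ∑ i ∈ I₁, c i = ∑ i ∈ I₂, c i)
    (p q : Fin h → ℕ) (hp : ∀ i, Nat.Prime (p i)) (hq : ∀ i, Nat.Prime (q i))
    (heq : ∑ i, (c i : ℝ) * Real.log (p i) = ∑ i, (c i : ℝ) * Real.log (q i)) :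
    p = q := by
  classical
  -- step 1: product equality over ℝ
  have hp0 : ∀ i, (0 : ℝ) < (p i : ℝ) := fun i => by exact_mod_cast (hp i).pos
  have hq0 : ∀ i, (0 : ℝ) < (q i : ℝ) := fun i => by exact_mod_cast (hq i).pos
  have hlog : ∀ (f : Fin h → ℕ) (hf : ∀ i, (0:ℝ) < (f i : ℝ)),
      ∑ i, (c i : ℝ) * Real.log (f i)
        = Real.log (∏ i, (f i : ℝ) ^ (c i)) := by
    intro f hf
    rw [Real.log_prod (fun i _ => zpow_ne_zero _ (ne_of_gt (hf i)))]
    simp [Real.log_zpow]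
  have hprodR : (∏ i, (p i : ℝ) ^ (c i)) = ∏ i, (q i : ℝ) ^ (c i) := by
    have h1 := hlog p hp0
    have h2 := hlog q hq0
    have hpos1 : (0:ℝ) < ∏ i, (p i : ℝ) ^ (c i) :=
      Finset.prod_pos fun i _ => zpow_pos (hp0 i) _
    have hpos2 : (0:ℝ) < ∏ i, (q i : ℝ) ^ (c i) :=
      Finset.prod_pos fun i _ => zpow_pos (hq0 i) _
    have := heq
    rw [h1, h2] at this
    calc (∏ i, (p i : ℝ) ^ (c i)) = Real.exp (Real.log (∏ i, (p i : ℝ) ^ (c i))) :=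
          (Real.exp_log hpos1).symm
      _ = Real.exp (Real.log (∏ i, (q i : ℝ) ^ (c i))) := by rw [this]
      _ = ∏ i, (q i : ℝ) ^ (c i) := Real.exp_log hpos2
  -- step 2: product equality over ℚ
  have hprodQ : (∏ i, (p i : ℚ) ^ (c i)) = ∏ i, (q i : ℚ) ^ (c i) := by
    have : ((∏ i, (p i : ℚ) ^ (c i) : ℚ) : ℝ) = ((∏ i, (q i : ℚ) ^ (c i) : ℚ) : ℝ) := by
      push_cast
      exact hprodR
    exact_mod_cast this
  -- step 3: valuation comparison, giving equal filtered sums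
  have key : ∀ r : ℕ, r.Prime →
      ∑ i ∈ univ.filter (fun i => p i = r), c i
        = ∑ i ∈ univ.filter (fun i => q i = r), c i := by
    intro r hr
    haveI : Fact r.Prime := ⟨hr⟩
    have hv : ∀ (f : Fin h → ℕ) (hf : ∀ i, Nat.Prime (f i)),
        padicValRat r (∏ i, (f i : ℚ) ^ (c i))
          = ∑ i ∈ univ.filter (fun i => f i = r), c i := by
      intro f hf
      rw [padicValRat_prod' r univ _ (fun i _ => zpow_ne_zero _ (by exact_mod_cast (hf i).pos.ne'))]
      rw [Finset.sum_congr rfl fun i _ => padicValRat_zpow' r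
        (x := (f i : ℚ)) (by exact_mod_cast (hf i).pos.ne') (c i)]
      rw [Finset.sum_congr rfl fun i _ => by
        rw [padicValRat_prime_prime r (f i) hr (hf i)]]
      simp [Finset.sum_ite_eq, mul_ite, Finset.sum_filter]
    rw [← hv p hp, ← hv q hq, hprodQ]
  -- step 4: conclude p = q via property N
  funext i
  have hkey := key (p i) (hp i)
  set S := univ.filter (fun j => p j = p i) with hS
  set T := univ.filter (fun j => q j = p i) with hT
  by_contra hne
  have hST : S = T := by
    by_contra hSTne
    apply hN
    refine ⟨S \ T, T \ S, disjoint_sdiff_sdiff, ?_, ?_⟩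
    · rw [Finset.nonempty_iff_ne_empty]
      intro hemp
      have h1 : S \ T = ∅ := by
        rw [← Finset.subset_empty, ← hemp]; exact Finset.subset_union_left
      have h2 : T \ S = ∅ := by
        rw [← Finset.subset_empty, ← hemp]; exact Finset.subset_union_right
      exact hSTne (Finset.Subset.antisymm
        (Finset.sdiff_eq_empty_iff_subset.mp h1) (Finset.sdiff_eq_empty_iff_subset.mp h2))
    · have e1 : ∑ j ∈ S \ (S ∩ T), c j + ∑ j ∈ S ∩ T, c j = ∑ j ∈ S, c j :=
        Finset.sum_sdiff Finset.inter_subset_left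
      have e2 : ∑ j ∈ T \ (S ∩ T), c j + ∑ j ∈ S ∩ T, c j = ∑ j ∈ T, c j :=
        Finset.sum_sdiff Finset.inter_subset_right
      rw [Finset.sdiff_inter_self_left] at e1
      rw [Finset.sdiff_inter_self_right] at e2
      omega
  have hiS : i ∈ S := by simp [hS]
  have hiT : i ∈ T := hST ▸ hiS
  rw [hT] at hiT
  simp only [Finset.mem_filter] at hiT
  exact hne (hiT.2.symm ▸ rfl)
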